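/- arXiv:2303.10088 — 2 statements merged into one kernel-verified Lean document; each statement's English description precedes it below -/
import Mathlib

section
/- For every ℓ ≥ 0, every set S ⊆ Σ*_ℓ of pairwise compatible words, and every boring extension e of S, there exists a boring extension e' of the full level Σ*_ℓ such that S⌢e ⊆ Σ*_ℓ⌢e'. -/
/-- The three-letter alphabet `Σ = {L, X, R}`. -/
inductive Sig : Type
  | L
  | X
  | R
  deriving DecidableEq

namespace Sig

def val : Sig → ℕ
  | L => 0
  | X => 1
  | R => 2

/-- The order `L <lex X <lex R` on letters. -/
def le (a b : Sig) : Prop := a.val ≤ b.val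

def lt (a b : Sig) : Prop := a.val < b.val

end Sig

/-- Finite words over the alphabet `Σ = {L, X, R}`. -/
abbrev Word : Type := List Sig

/-- The `i`-th letter of `w` (with a junk value out of range). -/
def idx (w : Word) (i : ℕ) : Sig := w.getD i Sig.L

/-- Strict lexicographic order on words: comparison at the first differing position, a
proper initial segment preceding its extensions. -/
def lexLt (u v : Word) : Prop :=
  (∃ i, i < u.length ∧ i < v.length ∧ Sig.lt (idx u i) (idx v i) ∧
    ∀ j < i, idx u j = idx v j) ∨
  (u.length < v.length ∧ ∀ j < u.length, idx u j = idx v j)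

def lexLe (u v : Word) : Prop := lexLt u v ∨ u = v

/-- The relation `≺`: there is `i < min(|u|,|v|)` with `(u_i, v_i) = (L, R)` and
`u_j ≤lex v_j` for all `j < i`. -/
def prec (u v : Word) : Prop :=
  ∃ i, i < u.length ∧ i < v.length ∧ idx u i = Sig.L ∧ idx v i = Sig.R ∧
    ∀ j < i, Sig.le (idx u j) (idx v j)

/-- The relation `⪯`. -/
def preceq (u v : Word) : Prop := prec u v ∨ u = v

/-- The relation `⊴`: element-wise comparison of words of the same length. -/
def trleq (u v : Word) : Prop :=
  u.length = v.length ∧ ∀ i < u.length, Sig.le (idx u i) (idx v i)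

/-- The relation `⊥`: `⊴`-incomparability. -/
def perp (u v : Word) : Prop := ¬ trleq u v ∧ ¬ trleq v u

/-- `u` and `v` are related if `u ⪯ v`, `v ⪯ u` or `u ⊥ v`. -/
def related (u v : Word) : Prop := preceq u v ∨ preceq v u ∨ perp u v

/-- The compatibility conditions for a pair `u ≤lex v`. -/
def compatPair (u v : Word) : Prop :=
  (∀ l < min u.length v.length, ¬ (idx u l = Sig.R ∧ idx v l = Sig.L)) ∧
  ((∃ l < min u.length v.length, idx u l = Sig.L ∧ idx v l = Sig.R) →
    ∀ l < min u.length v.length, Sig.le (idx u l) (idx v l))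

/-- `u` and `v` are compatible: the `≤lex`-smaller of the two satisfies the compatibility
conditions with the `≤lex`-larger. -/
def compatible (u v : Word) : Prop :=
  (lexLe u v ∧ compatPair u v) ∨ (lexLe v u ∧ compatPair v u)

/-- `S̄`: the segClosure of `S` under initial segments. -/
def segClosure (S : Set Word) : Set Word := {u | ∃ w ∈ S, u <+: w}

/-- Level `l` of a set of words. -/
def level (S : Set Word) (l : ℕ) : Set Word := {w | w ∈ S ∧ w.length = l}

/-- `S̄_l` : level `l` of the segClosure of `S`. -/
def cLevel (S : Set Word) (l : ℕ) : Set Word := level (segClosure S) l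

/-- Isomorphism of level structures `(A; ⪯, ⊴, ≤lex)`: a bijection preserving and
reflecting `⪯`, `⊴` and `≤lex`. -/
def LevelIso (A B : Set Word) : Prop :=
  ∃ e : Word → Word, Set.BijOn e A B ∧
    ∀ u ∈ A, ∀ v ∈ A,
      (preceq u v ↔ preceq (e u) (e v)) ∧
      (trleq u v ↔ trleq (e u) (e v)) ∧
      (lexLe u v ↔ lexLe (e u) (e v))

/-- A level `i` of `S` is interesting. -/
def Interesting (S : Set Word) (i : ℕ) : Prop :=
  ¬ LevelIso (cLevel S i) (cLevel S (i + 1)) ∨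
  (∃ u ∈ cLevel S (i + 1), ∃ v ∈ cLevel S (i + 1),
    ¬ compatible u v ∧ compatible (u.take i) (v.take i)) ∨
  (∃ u ∈ S, u.length = i)

/-- `τ_S(w)`: delete the characters of `w` whose indices are not interesting levels of `S`. -/
noncomputable def tauW (S : Set Word) (w : Word) : Word :=
  ((List.range w.length).filter
    (fun i => @decide (Interesting S i) (Classical.propDecidable _))).map (fun i => idx w i)

/-- A function is shape-preserving if it commutes with taking embedding types. -/
def ShapePreserving (S : Set Word) (f : Word → Word) : Prop :=
  ∀ w ∈ S, tauW S w = tauW (f '' S) (f w)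

/-- `A⌢c`. -/
def appendSet (A : Set Word) (c : Sig) : Set Word := (fun w => w ++ [c]) '' A

def LeafLevelAt (S : Set Word) (l : ℕ) (w : Word) : Prop :=
  w ∈ cLevel S l ∧ (∀ u ∈ cLevel S l, u ≠ w → related w u) ∧
  cLevel S (l + 1) = appendSet (cLevel S l \ {w}) Sig.X

def LeafLevel (S : Set Word) (l : ℕ) : Prop := ∃ w, LeafLevelAt S l w

def SplitLevelAt (S : Set Word) (l : ℕ) (w : Word) : Prop :=
  w ∈ cLevel S l ∧
  cLevel S (l + 1) =
    appendSet {z ∈ cLevel S l | lexLt z w} Sig.X ∪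
    {w ++ [Sig.X], w ++ [Sig.R]} ∪
    appendSet {z ∈ cLevel S l | lexLt w z} Sig.R

def SplitLevel (S : Set Word) (l : ℕ) : Prop := ∃ w, SplitLevelAt S l w

def NewPerpLevelAt (S : Set Word) (l : ℕ) (v w : Word) : Prop :=
  v ∈ cLevel S l ∧ w ∈ cLevel S l ∧ lexLt v w ∧ ¬ related v w ∧
  (∀ u ∈ cLevel S l, lexLt v u → lexLt u w → perp u v ∨ perp u w) ∧
  cLevel S (l + 1) =
    appendSet {z ∈ cLevel S l | lexLt z v} Sig.X ∪
    {v ++ [Sig.R]} ∪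
    appendSet {z ∈ cLevel S l | lexLt v z ∧ lexLt z w ∧ perp z v} Sig.X ∪
    appendSet {z ∈ cLevel S l | lexLt v z ∧ lexLt z w ∧ ¬ perp z v} Sig.R ∪
    {w ++ [Sig.X]} ∪
    appendSet {z ∈ cLevel S l | lexLt w z} Sig.R

def NewPerpLevel (S : Set Word) (l : ℕ) : Prop := ∃ v w, NewPerpLevelAt S l v w

def NewPrecLevelAt (S : Set Word) (l : ℕ) (v w : Word) : Prop :=
  v ∈ cLevel S l ∧ w ∈ cLevel S l ∧ lexLt v w ∧ ¬ related v w ∧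
  (∀ u ∈ cLevel S l, lexLt u v → preceq u w ∨ perp u v) ∧
  (∀ u ∈ cLevel S l, lexLt w u → preceq v u ∨ perp w u) ∧
  cLevel S (l + 1) =
    appendSet {z ∈ cLevel S l | lexLt z v ∧ perp z v} Sig.X ∪
    appendSet {z ∈ cLevel S l | lexLt z v ∧ ¬ perp z v} Sig.L ∪
    {v ++ [Sig.L]} ∪
    appendSet {z ∈ cLevel S l | lexLt v z ∧ lexLt z w} Sig.X ∪
    {w ++ [Sig.R]} ∪
    appendSet {z ∈ cLevel S l | lexLt w z ∧ perp w z} Sig.X ∪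
    appendSet {z ∈ cLevel S l | lexLt w z ∧ ¬ perp w z} Sig.R

def NewPrecLevel (S : Set Word) (l : ℕ) : Prop := ∃ v w, NewPrecLevelAt S l v w

def ExactlyOne (a b c d : Prop) : Prop :=
  (a ∧ ¬b ∧ ¬c ∧ ¬d) ∨ (¬a ∧ b ∧ ¬c ∧ ¬d) ∨ (¬a ∧ ¬b ∧ c ∧ ¬d) ∨ (¬a ∧ ¬b ∧ ¬c ∧ d)

/-- A poset-diary: an antichain under the initial segment relation such that on each level
below the supremum of lengths exactly one of the four critical events happens. -/
def PosetDiary (S : Set Word) : Prop :=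
  (∀ u ∈ S, ∀ v ∈ S, u <+: v → u = v) ∧
  ∀ l : ℕ, (∃ w ∈ S, l < w.length) →
    ExactlyOne (LeafLevel S l) (SplitLevel S l) (NewPerpLevel S l) (NewPrecLevel S l)

/-- `A⌢e`: extend each word of `A` by the letter that the extension `e` assigns to it. -/
def extSet (A : Set Word) (e : Word → Sig) : Set Word := (fun w => w ++ [e w]) '' A

/-- `e` is a boring extension of `A ⊆ Σ*_l` if level `l` is not an interesting level of
`A⌢e`. -/
def BoringExt (A : Set Word) (l : ℕ) (e : Word → Sig) : Prop :=
  ¬ Interesting (extSet A e) l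
section Aux

instance : Inhabited Sig := ⟨Sig.L⟩
instance (a b : Sig) : Decidable (Sig.le a b) := inferInstanceAs (Decidable (_ ≤ _))
instance (a b : Sig) : Decidable (Sig.lt a b) := inferInstanceAs (Decidable (_ < _))
instance : Fintype Sig := ⟨⟨{Sig.L, Sig.X, Sig.R}, by decide⟩, fun x => by cases x <;> decide⟩

lemma Sig.le_refl (a : Sig) : Sig.le a a := Nat.le_refl _
lemma Sig.le_L {a : Sig} (h : Sig.le a Sig.L) : a = Sig.L := by cases a <;> first | rfl | exact absurd h (by decide)
lemma Sig.R_le {a : Sig} (h : Sig.le Sig.R a) : a = Sig.R := by cases a <;> first | rfl | exact absurd h (by decide)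
lemma Sig.le_trans {a b c : Sig} (h1 : Sig.le a b) (h2 : Sig.le b c) : Sig.le a c := Nat.le_trans h1 h2
lemma Sig.L_le (a : Sig) : Sig.le Sig.L a := by cases a <;> decide
lemma Sig.le_R (a : Sig) : Sig.le a Sig.R := by cases a <;> decide

lemma idx_lt {w : Word} {i : ℕ} (h : i < w.length) : idx w i = w.get ⟨i, h⟩ := by
  simp [idx, List.getD_eq_getElem?_getD, List.getElem?_eq_getElem h]

lemma idx_append_lt {u : Word} (a : Sig) {i : ℕ} (h : i < u.length) :
    idx (u ++ [a]) i = idx u i := by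
  rw [idx_lt (by simp; omega), idx_lt h]
  simp [List.getElem_append, h]

lemma idx_append_self (u : Word) (a : Sig) : idx (u ++ [a]) u.length = a := by
  rw [idx_lt (by simp)]
  simp

lemma word_ext {u v : Word} (hl : u.length = v.length)
    (h : ∀ i < u.length, idx u i = idx v i) : u = v := by
  apply List.ext_getElem hl
  intro i h1 h2
  have := h i h1
  rwa [idx_lt h1, idx_lt h2] at this

lemma append_word_inj {u v : Word} {a b : Sig} (hl : u.length = v.length)
    (h : u ++ [a] = v ++ [b]) : u = v ∧ a = b := by
  have h1 := List.append_inj h (by simp [hl])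
  exact ⟨h1.1, by simpa using congrArg (fun w => w.headI) h1.2⟩

end Aux
section Aux2

lemma idx_cons_zero (a : Sig) (s : Word) : idx (a :: s) 0 = a := rfl
lemma idx_cons_succ (a : Sig) (s : Word) (j : ℕ) : idx (a :: s) (j+1) = idx s j := rfl

lemma lexLt_nil_right (u : Word) : ¬ lexLt u [] := by
  rintro (⟨i, _, h, _⟩ | ⟨h, _⟩) <;> simp at h

lemma lexLt_cons {a b : Sig} {s t : Word} :
    lexLt (a :: s) (b :: t) ↔ Sig.lt a b ∨ (a = b ∧ lexLt s t) := by
  constructor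
  · rintro (⟨i, hi1, hi2, hlt, heq⟩ | ⟨hl, heq⟩)
    · cases i with
      | zero => exact Or.inl hlt
      | succ i =>
        refine Or.inr ⟨heq 0 (Nat.succ_pos _), Or.inl ⟨i, ?_, ?_, hlt, fun j hj => heq (j+1) (by omega)⟩⟩
        · simpa using hi1
        · simpa using hi2
    · refine Or.inr ⟨heq 0 (Nat.succ_pos _), Or.inr ⟨by simpa using hl, fun j hj => heq (j+1) (by simpa using hj)⟩⟩
  · rintro (hlt | ⟨rfl, (⟨i, hi1, hi2, hlt, heq⟩ | ⟨hl, heq⟩)⟩)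
    · exact Or.inl ⟨0, Nat.succ_pos _, Nat.succ_pos _, hlt, fun j hj => by omega⟩
    · refine Or.inl ⟨i+1, by simpa using hi1, by simpa using hi2, hlt, fun j hj => ?_⟩
      cases j with
      | zero => rfl
      | succ j => exact heq j (by omega)
    · refine Or.inr ⟨by simpa using hl, fun j hj => ?_⟩
      cases j with
      | zero => rfl
      | succ j => exact heq j (by simpa using hj)

lemma Sig.val_inj : ∀ {a b : Sig}, Sig.val a = Sig.val b → a = b := by
  intro a b
  cases a <;> cases b <;> simp [Sig.val]

/-- Rank of a word: base-3 value. -/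
def rnk : Word → ℕ
  | [] => 0
  | a :: s => Sig.val a * 3 ^ s.length + rnk s

lemma rnk_lt_pow (w : Word) : rnk w < 3 ^ w.length := by
  induction w with
  | nil => simp [rnk]
  | cons a s ih =>
    have hv : Sig.val a ≤ 2 := by cases a <;> simp [Sig.val]
    have : Sig.val a * 3 ^ s.length + rnk s < (Sig.val a + 1) * 3 ^ s.length := by
      nlinarith [ih]
    calc rnk (a :: s) < (Sig.val a + 1) * 3 ^ s.length := this
      _ ≤ 3 * 3 ^ s.length := by nlinarith [pow_pos (by norm_num : (0:ℕ) < 3) s.length]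
      _ = 3 ^ (a :: s).length := by rw [List.length_cons]; ring

lemma lexLt_rnk : ∀ {u v : Word}, u.length = v.length → lexLt u v → rnk u < rnk v := by
  intro u
  induction u with
  | nil =>
    intro v hl hlt
    have : v = [] := by cases v <;> simp_all
    subst this
    exact absurd hlt (lexLt_nil_right _)
  | cons a s ih =>
    intro v hl hlt
    cases v with
    | nil => exact absurd hlt (lexLt_nil_right _)
    | cons b t =>
      have hst : s.length = t.length := by simpa using hl
      rcases lexLt_cons.1 hlt with h | ⟨rfl, h⟩
      · have h1 : Sig.val a + 1 ≤ Sig.val b := h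
        have h2 := rnk_lt_pow s
        rw [hst] at h2
        simp only [rnk, hst]
        have h3 : (Sig.val a + 1) * 3 ^ t.length ≤ Sig.val b * 3 ^ t.length :=
          Nat.mul_le_mul_right _ h1
        have h4 : Sig.val a * 3 ^ t.length + rnk s < (Sig.val a + 1) * 3 ^ t.length := by
          rw [Nat.add_mul]; omega
        omega
      · have := ih hst h
        simp only [rnk, hst]
        omega

lemma lexLt_irrefl (u : Word) : ¬ lexLt u u := fun h => by
  have : rnk u < rnk u := lexLt_rnk rfl h
  omega

lemma lexLt_asymm {u v : Word} (hl : u.length = v.length) (h1 : lexLt u v) (h2 : lexLt v u) : False := by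
  have := lexLt_rnk hl h1
  have := lexLt_rnk hl.symm h2
  omega

lemma lexLt_trichotomy {u v : Word} (hl : u.length = v.length) (hne : u ≠ v) :
    lexLt u v ∨ lexLt v u := by
  have hex : ∃ i, i < u.length ∧ idx u i ≠ idx v i := by
    by_contra hc
    push_neg at hc
    exact hne (word_ext hl fun i hi => hc i hi)
  classical
  set i := Nat.find hex with hidef
  obtain ⟨hi, hne2⟩ := Nat.find_spec hex
  have heq : ∀ j < i, idx u j = idx v j := by
    intro j hj
    by_contra hc
    exact Nat.find_min hex hj ⟨by omega, hc⟩
  rcases Nat.lt_trichotomy (Sig.val (idx u i)) (Sig.val (idx v i)) with h | h | h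
  · exact Or.inl (Or.inl ⟨i, hi, hl ▸ hi, h, heq⟩)
  · exact absurd (Sig.val_inj h) hne2
  · exact Or.inr (Or.inl ⟨i, hl ▸ hi, hi, h, fun j hj => (heq j hj).symm⟩)

end Aux2
section Aux3

variable {l : ℕ}

lemma trleq_refl (u : Word) : trleq u u := ⟨rfl, fun i _ => Sig.le_refl _⟩

lemma trleq_trans {u v w : Word} (h1 : trleq u v) (h2 : trleq v w) : trleq u w :=
  ⟨h1.1.trans h2.1, fun i hi => Sig.le_trans (h1.2 i hi) (h2.2 i (h1.1 ▸ hi))⟩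

lemma prec_irrefl (u : Word) : ¬ prec u u := by
  rintro ⟨i, _, _, h1, h2, _⟩
  rw [h1] at h2
  exact Sig.noConfusion h2

lemma trleq_ne_lexLt {u v : Word} (h : trleq u v) (hne : u ≠ v) : lexLt u v := by
  have hex : ∃ i, i < u.length ∧ idx u i ≠ idx v i := by
    by_contra hc
    push_neg at hc
    exact hne (word_ext h.1 fun i hi => hc i hi)
  classical
  set i := Nat.find hex with hidef
  obtain ⟨hi, hne2⟩ := Nat.find_spec hex
  have heq : ∀ j < i, idx u j = idx v j := by
    intro j hj
    by_contra hc
    exact Nat.find_min hex hj ⟨by omega, hc⟩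
  have hle := h.2 i hi
  have hlt : Sig.lt (idx u i) (idx v i) :=
    lt_of_le_of_ne hle (fun hv => hne2 (Sig.val_inj hv))
  exact Or.inl ⟨i, hi, h.1 ▸ hi, hlt, heq⟩

lemma idx_append_self' {u : Word} {a : Sig} (hu : u.length = l) : idx (u ++ [a]) l = a := by
  rw [← hu]; exact idx_append_self u a

lemma lexLt_append_iff {u v : Word} {a b : Sig} (hu : u.length = l) (hv : v.length = l) :
    lexLt (u ++ [a]) (v ++ [b]) ↔ lexLt u v ∨ (u = v ∧ Sig.lt a b) := by
  constructor
  · rintro (⟨i, hi1, hi2, hlt, heq⟩ | ⟨hl, _⟩)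
    · simp only [List.length_append, List.length_singleton, hu, hv] at hi1 hi2
      rcases Nat.lt_or_ge i l with hil | hil
      · left
        refine Or.inl ⟨i, hu ▸ hil, hv ▸ hil, ?_, fun j hj => ?_⟩
        · rwa [idx_append_lt _ (hu ▸ hil), idx_append_lt _ (hv ▸ hil)] at hlt
        · have := heq j hj
          rwa [idx_append_lt _ (by omega), idx_append_lt _ (by omega)] at this
      · have hil : i = l := by omega
        subst hil
        right
        constructor
        · apply word_ext (by omega)
          intro j hj
          have := heq j (by omega)
          rwa [idx_append_lt _ hj, idx_append_lt _ (by omega)] at this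
        · rwa [idx_append_self' hu, idx_append_self' hv] at hlt
    · simp only [List.length_append, List.length_singleton, hu, hv] at hl
      omega
  · rintro ((⟨i, hi1, hi2, hlt, heq⟩ | ⟨hl, heq⟩) | ⟨rfl, hab⟩)
    · refine Or.inl ⟨i, by simp; omega, by simp; omega, ?_, fun j hj => ?_⟩
      · rwa [idx_append_lt _ hi1, idx_append_lt _ hi2]
      · rw [idx_append_lt _ (by omega), idx_append_lt _ (by omega)]
        exact heq j hj
    · omega
    · refine Or.inl ⟨l, by simp [hu], by simp [hv], ?_, fun j hj => by
        rw [idx_append_lt _ (by omega), idx_append_lt _ (by omega)]⟩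
      rwa [idx_append_self' hu, idx_append_self' hv]

lemma trleq_append_iff {u v : Word} {a b : Sig} (hu : u.length = l) (hv : v.length = l) :
    trleq (u ++ [a]) (v ++ [b]) ↔ trleq u v ∧ Sig.le a b := by
  constructor
  · rintro ⟨hlen, h⟩
    refine ⟨⟨by omega, fun i hi => ?_⟩, ?_⟩
    · have := h i (by simp; omega)
      rwa [idx_append_lt _ hi, idx_append_lt _ (by omega)] at this
    · have := h l (by simp [hu])
      rwa [idx_append_self' hu, idx_append_self' hv] at this
  · rintro ⟨⟨hlen, h⟩, hab⟩
    refine ⟨by simp [hu, hv], fun i hi => ?_⟩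
    simp only [List.length_append, List.length_singleton, hu] at hi
    rcases Nat.lt_or_ge i l with hil | hil
    · rw [idx_append_lt _ (by omega), idx_append_lt _ (by omega)]
      exact h i (by omega)
    · have : i = l := by omega
      subst this
      rwa [idx_append_self' hu, idx_append_self' hv]

lemma prec_append_iff {u v : Word} {a b : Sig} (hu : u.length = l) (hv : v.length = l) :
    prec (u ++ [a]) (v ++ [b]) ↔
      prec u v ∨ (a = Sig.L ∧ b = Sig.R ∧ ∀ j < l, Sig.le (idx u j) (idx v j)) := by
  constructor
  · rintro ⟨i, hi1, hi2, hL, hR, hle⟩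
    simp only [List.length_append, List.length_singleton, hu, hv] at hi1 hi2
    rcases Nat.lt_or_ge i l with hil | hil
    · left
      refine ⟨i, hu ▸ hil, hv ▸ hil, ?_, ?_, fun j hj => ?_⟩
      · rwa [idx_append_lt _ (by omega)] at hL
      · rwa [idx_append_lt _ (by omega)] at hR
      · have := hle j hj
        rwa [idx_append_lt _ (by omega), idx_append_lt _ (by omega)] at this
    · have : i = l := by omega
      subst this
      right
      refine ⟨by rwa [idx_append_self' hu] at hL,
        by rwa [idx_append_self' hv] at hR, fun j hj => ?_⟩
      have := hle j hj
      rwa [idx_append_lt _ (by omega), idx_append_lt _ (by omega)] at this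
  · rintro (⟨i, hi1, hi2, hL, hR, hle⟩ | ⟨rfl, rfl, hle⟩)
    · refine ⟨i, by simp; omega, by simp; omega, ?_, ?_, fun j hj => ?_⟩
      · rwa [idx_append_lt _ hi1]
      · rwa [idx_append_lt _ hi2]
      · rw [idx_append_lt _ (by omega), idx_append_lt _ (by omega)]
        exact hle j (by omega)
    · refine ⟨l, by simp [hu], by simp [hv], idx_append_self' hu,
        idx_append_self' hv, fun j hj => ?_⟩
      rw [idx_append_lt _ (by omega), idx_append_lt _ (by omega)]
      exact hle j hj

lemma take_append_self {u : Word} {a : Sig} (hu : u.length = l) : (u ++ [a]).take l = u := by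
  rw [← hu]
  exact List.take_left

end Aux3
section Aux4

variable {l : ℕ}

lemma mem_extSet_length {A : Set Word} {f : Word → Sig} (hA : ∀ w ∈ A, w.length = l)
    {u : Word} (hu : u ∈ extSet A f) : u.length = l + 1 := by
  obtain ⟨s, hs, rfl⟩ := hu
  simp [hA s hs]

lemma cLevel_extSet_self {A : Set Word} {f : Word → Sig} (hA : ∀ w ∈ A, w.length = l) :
    cLevel (extSet A f) l = A := by
  ext u
  constructor
  · rintro ⟨⟨w, ⟨s, hsA, rfl⟩, hpre⟩, hlen⟩
    have : u = (s ++ [f s]).take u.length := List.prefix_iff_eq_take.1 hpre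
    rw [hlen, take_append_self (hA s hsA)] at this
    rwa [this]
  · intro hu
    exact ⟨⟨u ++ [f u], ⟨u, hu, rfl⟩, List.prefix_append u [f u]⟩, hA u hu⟩

lemma cLevel_extSet_succ {A : Set Word} {f : Word → Sig} (hA : ∀ w ∈ A, w.length = l) :
    cLevel (extSet A f) (l + 1) = extSet A f := by
  ext u
  constructor
  · rintro ⟨⟨w, hw, hpre⟩, hlen⟩
    have hwl : w.length = l + 1 := mem_extSet_length hA hw
    have : u = w := List.IsPrefix.eq_of_length hpre (by omega)
    rwa [this]
  · intro hu
    exact ⟨⟨u, hu, List.prefix_refl u⟩, mem_extSet_length hA hu⟩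

end Aux4
/-- The extension letter: `R` if forced from below by an `R` of `S`, else `L` if forced
from above by an `L` of `S`, else `X`. -/
noncomputable def extLetter (S : Set Word) (e : Word → Sig) (w : Word) : Sig :=
  @ite _ (∃ q ∈ S, trleq q w ∧ e q = Sig.R) (Classical.propDecidable _) Sig.R
    (@ite _ (∃ p ∈ S, trleq w p ∧ e p = Sig.L) (Classical.propDecidable _) Sig.L Sig.X)

lemma extLetter_R {S : Set Word} {e : Word → Sig} {w : Word}
    (h : ∃ q ∈ S, trleq q w ∧ e q = Sig.R) : extLetter S e w = Sig.R := by
  unfold extLetter; rw [if_pos h]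

lemma extLetter_eq_R {S : Set Word} {e : Word → Sig} {w : Word}
    (h : extLetter S e w = Sig.R) : ∃ q ∈ S, trleq q w ∧ e q = Sig.R := by
  unfold extLetter at h
  by_cases h1 : ∃ q ∈ S, trleq q w ∧ e q = Sig.R
  · exact h1
  · rw [if_neg h1] at h
    by_cases h2 : ∃ p ∈ S, trleq w p ∧ e p = Sig.L <;> simp [h2] at h

lemma extLetter_eq_L {S : Set Word} {e : Word → Sig} {w : Word}
    (h : extLetter S e w = Sig.L) :
    (¬ ∃ q ∈ S, trleq q w ∧ e q = Sig.R) ∧ (∃ p ∈ S, trleq w p ∧ e p = Sig.L) := by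
  unfold extLetter at h
  by_cases h1 : ∃ q ∈ S, trleq q w ∧ e q = Sig.R
  · rw [if_pos h1] at h; exact absurd h (by simp)
  · rw [if_neg h1] at h
    by_cases h2 : ∃ p ∈ S, trleq w p ∧ e p = Sig.L
    · exact ⟨h1, h2⟩
    · rw [if_neg h2] at h; exact absurd h (by simp)

lemma extLetter_L {S : Set Word} {e : Word → Sig} {w : Word}
    (h1 : ¬ ∃ q ∈ S, trleq q w ∧ e q = Sig.R) (h2 : ∃ p ∈ S, trleq w p ∧ e p = Sig.L) :
    extLetter S e w = Sig.L := by
  unfold extLetter; rw [if_neg h1, if_pos h2]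

lemma extLetter_X {S : Set Word} {e : Word → Sig} {w : Word}
    (h1 : ¬ ∃ q ∈ S, trleq q w ∧ e q = Sig.R) (h2 : ¬ ∃ p ∈ S, trleq w p ∧ e p = Sig.L) :
    extLetter S e w = Sig.X := by
  unfold extLetter; rw [if_neg h1, if_neg h2]

theorem boring_extension_extends' (l : ℕ) (S : Set Word) (hS : ∀ w ∈ S, w.length = l)
    (hcompat : ∀ u ∈ S, ∀ v ∈ S, compatible u v)
    (e : Word → Sig) (hbor : BoringExt S l e) :
    ∃ e' : Word → Sig, BoringExt {w : Word | w.length = l} l e' ∧ ∀ w ∈ S, e' w = e w := by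
  classical
  rw [BoringExt, Interesting] at hbor
  push_neg at hbor
  obtain ⟨hIso, hNoBad, -⟩ := hbor
  rw [cLevel_extSet_self hS, cLevel_extSet_succ hS] at hIso
  rw [cLevel_extSet_succ hS] at hNoBad
  -- the canonical extension map for `e`
  set m : Word → Word := fun w => w ++ [e w] with hm
  obtain ⟨g, hgbij, hgrel⟩ := hIso
  -- `g` must be the canonical map
  have hcanon : ∀ w ∈ S, g w = m w := by
    by_contra hc
    push_neg at hc
    set C := {w | w ∈ S ∧ g w ≠ m w} with hC
    have hCfin : C.Finite := by
      apply Set.Finite.subset (List.finite_length_eq Sig l)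
      intro w hw
      exact hS w hw.1
    have hCne : C.Nonempty := by
      obtain ⟨w, hw1, hw2⟩ := hc
      exact ⟨w, hw1, hw2⟩
    obtain ⟨w0, hw0C, hmin⟩ := Set.exists_min_image C rnk hCfin hCne
    obtain ⟨hw0S, hw0ne⟩ := hw0C
    have hgw0 : g w0 ∈ extSet S e := hgbij.mapsTo hw0S
    have hglen : (g w0).length = l + 1 := mem_extSet_length hS hgw0
    have hmlen : (m w0).length = l + 1 := by simp [hm, hS w0 hw0S]
    rcases lexLt_trichotomy (hglen.trans hmlen.symm) hw0ne with hlt | hlt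
    · -- g w0 <lex m w0
      obtain ⟨w1, hw1S, hw1e0⟩ := hgw0
      have hw1e : w1 ++ [e w1] = g w0 := hw1e0
      have hlt' : lexLt (w1 ++ [e w1]) (w0 ++ [e w0]) := by rwa [hw1e]
      rcases (lexLt_append_iff (hS w1 hw1S) (hS w0 hw0S)).1 hlt' with h | ⟨rfl, _⟩
      · by_cases hw1C : w1 ∈ C
        · exact absurd (hmin w1 hw1C) (by have := lexLt_rnk ((hS w1 hw1S).trans (hS w0 hw0S).symm) h; omega)
        · have hgw1 : g w1 = m w1 := by
            by_contra hne; exact hw1C ⟨hw1S, hne⟩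
          have : g w1 = g w0 := by rw [hgw1]; exact hw1e
          have := hgbij.injOn hw1S hw0S this
          subst this
          exact absurd (lexLt_rnk rfl h) (by omega)
      · exact hw0ne hw1e.symm
    · -- m w0 <lex g w0
      have hmw0 : m w0 ∈ extSet S e := ⟨w0, hw0S, rfl⟩
      obtain ⟨w1, hw1S, hw1e⟩ := hgbij.surjOn hmw0
      have hne1 : w1 ≠ w0 := by
        rintro rfl
        exact hw0ne hw1e
      have hlt' : lexLt (g w1) (g w0) := by rwa [hw1e]
      have hlex : lexLe w1 w0 := (hgrel w1 hw1S w0 hw0S).2.2.2 (Or.inl hlt')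
      have hlt2 : lexLt w1 w0 := by
        rcases hlex with h | h
        · exact h
        · exact absurd h hne1
      by_cases hw1C : w1 ∈ C
      · exact absurd (hmin w1 hw1C) (by have := lexLt_rnk ((hS w1 hw1S).trans (hS w0 hw0S).symm) hlt2; omega)
      · have hgw1 : g w1 = m w1 := by
          by_contra hne; exact hw1C ⟨hw1S, hne⟩
        rw [hgw1] at hw1e
        have := append_word_inj ((hS w1 hw1S).trans (hS w0 hw0S).symm) hw1e
        exact hne1 this.1
  have hrel : ∀ u ∈ S, ∀ v ∈ S,
      (preceq u v ↔ preceq (m u) (m v)) ∧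
      (trleq u v ↔ trleq (m u) (m v)) ∧
      (lexLe u v ↔ lexLe (m u) (m v)) := by
    intro u hu v hv
    have := hgrel u hu v hv
    rwa [hcanon u hu, hcanon v hv] at this

  -- Facts about `e` on `S` extracted from boringness
  have H1 : ∀ p ∈ S, ∀ q ∈ S, trleq p q → Sig.le (e p) (e q) := by
    intro p hp q hq hpq
    have := (hrel p hp q hq).2.1.1 hpq
    exact ((trleq_append_iff (hS p hp) (hS q hq)).1 this).2
  have HprecLR : ∀ p ∈ S, ∀ q ∈ S, e p = Sig.L → e q = Sig.R → trleq p q → prec p q := by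
    intro p hp q hq hpL hqR hpq
    have hple : ∀ j < l, Sig.le (idx p j) (idx q j) := by
      intro j hj
      exact hpq.2 j (by rw [hS p hp]; omega)
    have hprec : prec (m p) (m q) :=
      (prec_append_iff (hS p hp) (hS q hq)).2 (Or.inr ⟨hpL, hqR, hple⟩)
    have := (hrel p hp q hq).1.2 (Or.inl hprec)
    rcases this with h | rfl
    · exact h
    · rw [hpL] at hqR; exact absurd hqR (by simp)
  have HRL : ∀ p ∈ S, ∀ q ∈ S, lexLt p q → e p = Sig.R → e q = Sig.L → False := by
    intro p hp q hq hpq hpR hqL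
    have hmp : m p ∈ extSet S e := ⟨p, hp, rfl⟩
    have hmq : m q ∈ extSet S e := ⟨q, hq, rfl⟩
    apply hNoBad (m p) hmp (m q) hmq
    · rintro (⟨hle, hcp⟩ | ⟨hle, hcp⟩)
      · refine hcp.1 l (by simp [hm, hS p hp, hS q hq]) ⟨?_, ?_⟩
        · rw [hm]; rw [idx_append_self' (hS p hp), hpR]
        · rw [hm]; rw [idx_append_self' (hS q hq), hqL]
      · rcases hle with h | h
        · rcases (lexLt_append_iff (hS q hq) (hS p hp)).1 h with h2 | ⟨heq, _⟩
          · exact lexLt_asymm ((hS p hp).trans (hS q hq).symm) hpq h2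
          · rw [heq] at hpq; exact lexLt_irrefl _ hpq
        · have := append_word_inj ((hS q hq).trans (hS p hp).symm) h
          rw [this.1] at hpq
          exact lexLt_irrefl p hpq
    · have h1 : (m p).take l = p := take_append_self (hS p hp)
      have h2 : (m q).take l = q := take_append_self (hS q hq)
      rw [h1, h2]
      exact hcompat p hp q hq
  have HLR : ∀ p ∈ S, ∀ q ∈ S, lexLt p q → e p = Sig.L → e q = Sig.R → trleq p q := by
    intro p hp q hq hpq hpL hqR
    by_contra hnt
    have hmp : m p ∈ extSet S e := ⟨p, hp, rfl⟩
    have hmq : m q ∈ extSet S e := ⟨q, hq, rfl⟩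
    apply hNoBad (m p) hmp (m q) hmq
    · rintro (⟨hle, hcp⟩ | ⟨hle, hcp⟩)
      · apply hnt
        have hex : ∃ i < min (m p).length (m q).length,
            idx (m p) i = Sig.L ∧ idx (m q) i = Sig.R := by
          refine ⟨l, by simp [hm, hS p hp, hS q hq], ?_, ?_⟩
          · rw [hm]; rw [idx_append_self' (hS p hp), hpL]
          · rw [hm]; rw [idx_append_self' (hS q hq), hqR]
        have hall := hcp.2 hex
        refine ⟨(hS p hp).trans (hS q hq).symm, fun i hi => ?_⟩
        have hil : i < l := by rwa [hS p hp] at hi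
        have := hall i (by simp [hm, hS p hp, hS q hq]; omega)
        rwa [hm, idx_append_lt _ (by rw [hS p hp]; omega),
          idx_append_lt _ (by rw [hS q hq]; omega)] at this
      · rcases hle with h | h
        · rcases (lexLt_append_iff (hS q hq) (hS p hp)).1 h with h2 | ⟨heq, _⟩
          · exact lexLt_asymm ((hS p hp).trans (hS q hq).symm) hpq h2
          · rw [heq] at hpq; exact lexLt_irrefl _ hpq
        · have := append_word_inj ((hS q hq).trans (hS p hp).symm) h
          rw [this.1] at hpq
          exact lexLt_irrefl p hpq
    · have h1 : (m p).take l = p := take_append_self (hS p hp)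
      have h2 : (m q).take l = q := take_append_self (hS q hq)
      rw [h1, h2]
      exact hcompat p hp q hq
  -- the extension letter function
  set e' : Word → Sig := extLetter S e with he'
  have hRleL : ¬ Sig.le Sig.R Sig.L := by decide
  have hRleX : ¬ Sig.le Sig.R Sig.X := by decide
  have hXleL : ¬ Sig.le Sig.X Sig.L := by decide
  -- no conflict
  have Kconf : ∀ w : Word, (∃ q ∈ S, trleq q w ∧ e q = Sig.R) →
      (∃ p ∈ S, trleq w p ∧ e p = Sig.L) → False := by
    rintro w ⟨q, hq, hqw, hqR⟩ ⟨p, hp, hwp, hpL⟩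
    have := H1 q hq p hp (trleq_trans hqw hwp)
    rw [hqR, hpL] at this
    exact hRleL this
  -- e' agrees with e on S
  have hagree : ∀ w ∈ S, e' w = e w := by
    intro w hw
    rw [he']
    cases hew : e w with
    | R => exact extLetter_R ⟨w, hw, trleq_refl w, hew⟩
    | L =>
      refine extLetter_L ?_ ⟨w, hw, trleq_refl w, hew⟩
      rintro ⟨q, hq, hqw, hqR⟩
      have := H1 q hq w hw hqw
      rw [hqR, hew] at this
      exact hRleL this
    | X =>
      refine extLetter_X ?_ ?_
      · rintro ⟨q, hq, hqw, hqR⟩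
        have := H1 q hq w hw hqw
        rw [hqR, hew] at this
        exact hRleX this
      · rintro ⟨p, hp, hwp, hpL⟩
        have := H1 w hw p hp hwp
        rw [hpL, hew] at this
        exact hXleL this
  -- monotonicity of e'
  have Kmono : ∀ u v : Word, trleq u v → Sig.le (e' u) (e' v) := by
    intro u v huv
    rw [he']
    by_cases hru : ∃ q ∈ S, trleq q u ∧ e q = Sig.R
    · obtain ⟨q, hq, hqu, hqR⟩ := hru
      rw [extLetter_R ⟨q, hq, hqu, hqR⟩, extLetter_R ⟨q, hq, trleq_trans hqu huv, hqR⟩]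
      exact Sig.le_refl _
    · by_cases hlu : ∃ p ∈ S, trleq u p ∧ e p = Sig.L
      · rw [extLetter_L hru hlu]
        exact Sig.L_le _
      · rw [extLetter_X hru hlu]
        by_cases hrv : ∃ q ∈ S, trleq q v ∧ e q = Sig.R
        · rw [extLetter_R hrv]; decide
        · by_cases hlv : ∃ p ∈ S, trleq v p ∧ e p = Sig.L
          · obtain ⟨p, hp, hvp, hpL⟩ := hlv
            exact absurd ⟨p, hp, trleq_trans huv hvp, hpL⟩ hlu
          · rw [extLetter_X hrv hlv]; decide
  -- key structural lemma for (L, R) extension pairs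
  have K2 : ∀ u v : Word, u.length = l → v.length = l → u ≠ v →
      e' u = Sig.L → e' v = Sig.R → trleq u v ∧ prec u v := by
    intro u v hul hvl hne huL hvR
    obtain ⟨-, p, hp, hup, hpL⟩ := extLetter_eq_L (he' ▸ huL)
    obtain ⟨q, hq, hqv, hqR⟩ := extLetter_eq_R (he' ▸ hvR)
    have hpqne : p ≠ q := by
      rintro rfl
      rw [hpL] at hqR
      exact absurd hqR (by simp)
    have hpq : trleq p q := by
      rcases lexLt_trichotomy ((hS p hp).trans (hS q hq).symm) hpqne with h | h
      · exact HLR p hp q hq h hpL hqR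
      · exact absurd (HRL q hq p hp h hqR hpL) not_false
    have htr : trleq u v := trleq_trans hup (trleq_trans hpq hqv)
    refine ⟨htr, ?_⟩
    obtain ⟨i, hi1, hi2, hpiL, hqiR, hple⟩ := HprecLR p hp q hq hpL hqR hpq
    have hil : i < l := by rwa [hS p hp] at hi1
    refine ⟨i, by omega, by omega, ?_, ?_, fun j hj => htr.2 j (by omega)⟩
    · have := hup.2 i (by omega)
      rw [hpiL] at this
      exact Sig.le_L this
    · have := hqv.2 i (by rw [hS q hq]; omega)
      rw [hqiR] at this
      exact Sig.R_le this
  -- (R, L) extension pairs force reversed lexicographic order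
  have K3 : ∀ u v : Word, u.length = l → v.length = l →
      e' u = Sig.R → e' v = Sig.L → lexLt v u := by
    intro u v hul hvl huR hvL
    obtain ⟨q, hq, hqu, hqR⟩ := extLetter_eq_R (he' ▸ huR)
    obtain ⟨-, p, hp, hvp, hpL⟩ := extLetter_eq_L (he' ▸ hvL)
    have hpqne : p ≠ q := by
      rintro rfl
      rw [hpL] at hqR
      exact absurd hqR (by simp)
    have hpq : trleq p q := by
      rcases lexLt_trichotomy ((hS p hp).trans (hS q hq).symm) hpqne with h | h
      · exact HLR p hp q hq h hpL hqR
      · exact absurd (HRL q hq p hp h hqR hpL) not_false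
    have htr : trleq v u := trleq_trans hvp (trleq_trans hpq hqu)
    apply trleq_ne_lexLt htr
    rintro rfl
    rw [huR] at hvL
    exact absurd hvL (by simp)
  
  -- compatibility extension lemma
  have CE : ∀ u v : Word, u.length = l → v.length = l → lexLe u v → compatPair u v →
      lexLe (u ++ [e' u]) (v ++ [e' v]) ∧ compatPair (u ++ [e' u]) (v ++ [e' v]) := by
    intro u v hul hvl hle hcp
    constructor
    · rcases hle with h | rfl
      · exact Or.inl ((lexLt_append_iff hul hvl).2 (Or.inl h))
      · exact Or.inr rfl
    constructor
    · intro i hi hbad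
      obtain ⟨hb1, hb2⟩ := hbad
      have hi' : i < l + 1 := by simp [hul, hvl] at hi; omega
      rcases Nat.lt_or_ge i l with hil | hil
      · rw [idx_append_lt _ (by omega)] at hb1
        rw [idx_append_lt _ (by omega)] at hb2
        exact hcp.1 i (by simp [hul, hvl]; omega) ⟨hb1, hb2⟩
      · have hileq : i = l := by omega
        subst hileq
        rw [idx_append_self' hul] at hb1
        rw [idx_append_self' hvl] at hb2
        have hvu := K3 u v hul hvl hb1 hb2
        rcases hle with h | rfl
        · exact lexLt_asymm (hul.trans hvl.symm) h hvu
        · exact lexLt_irrefl _ hvu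
    · intro hex j hj
      have htr : trleq u v := by
        obtain ⟨i, hi, hiL, hiR⟩ := hex
        have hi' : i < l + 1 := by simp [hul, hvl] at hi; omega
        rcases Nat.lt_or_ge i l with hil | hil
        · rw [idx_append_lt _ (by omega)] at hiL
          rw [idx_append_lt _ (by omega)] at hiR
          have hall := hcp.2 ⟨i, by simp [hul, hvl]; omega, hiL, hiR⟩
          exact ⟨hul.trans hvl.symm, fun k hk => hall k (by simp [hul, hvl]; omega)⟩
        · have hileq : i = l := by omega
          subst hileq
          rw [idx_append_self' hul] at hiL
          rw [idx_append_self' hvl] at hiR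
          by_cases hne : u = v
          · subst hne
            rw [hiL] at hiR
            exact absurd hiR (by simp)
          · exact (K2 u v hul hvl hne hiL hiR).1
      have hjl : j < l + 1 := by simp [hul, hvl] at hj; omega
      rcases Nat.lt_or_ge j l with hjl' | hjl'
      · rw [idx_append_lt _ (by omega), idx_append_lt _ (by omega)]
        exact htr.2 j (by omega)
      · have hjeq : j = l := by omega
        subst hjeq
        rw [idx_append_self' hul, idx_append_self' hvl]
        exact Kmono u v htr
  -- now assemble
  refine ⟨e', ?_, hagree⟩
  rw [BoringExt, Interesting]
  push_neg
  have hA' : ∀ w ∈ {w : Word | w.length = l}, w.length = l := fun w h => h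
  rw [cLevel_extSet_self hA', cLevel_extSet_succ hA']
  refine ⟨?_, ?_, ?_⟩
  · -- the level structures are isomorphic
    refine ⟨fun w => w ++ [e' w], ?_, ?_⟩
    · apply Set.InjOn.bijOn_image
      intro u hu v hv h
      exact (append_word_inj ((hA' u hu).trans (hA' v hv).symm) h).1
    · intro u hu v hv
      have hul : u.length = l := hu
      have hvl : v.length = l := hv
      refine ⟨?_, ?_, ?_⟩
      · constructor
        · rintro (hp | rfl)
          · exact Or.inl ((prec_append_iff hul hvl).2 (Or.inl hp))
          · exact Or.inr rfl
        · rintro (hp | heq)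
          · rcases (prec_append_iff hul hvl).1 hp with h | ⟨hL, hR, -⟩
            · exact Or.inl h
            · by_cases hne : u = v
              · subst hne
                rw [hL] at hR
                exact absurd hR (by simp)
              · exact Or.inl (K2 u v hul hvl hne hL hR).2
          · exact Or.inr (append_word_inj (hul.trans hvl.symm) heq).1
      · constructor
        · intro h
          exact (trleq_append_iff hul hvl).2 ⟨h, Kmono u v h⟩
        · intro h
          exact ((trleq_append_iff hul hvl).1 h).1
      · constructor
        · rintro (h | rfl)
          · exact Or.inl ((lexLt_append_iff hul hvl).2 (Or.inl h))
          · exact Or.inr rfl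
        · rintro (h | heq)
          · rcases (lexLt_append_iff hul hvl).1 h with h2 | ⟨heq2, -⟩
            · exact Or.inl h2
            · exact Or.inr heq2
          · exact Or.inr (append_word_inj (hul.trans hvl.symm) heq).1
  · -- no new incompatible pairs
    intro x hx y hy hnc hcpre
    apply hnc
    obtain ⟨u, hu, hxe⟩ := hx
    obtain ⟨v, hv, hye⟩ := hy
    have hxe' : u ++ [e' u] = x := hxe
    have hye' : v ++ [e' v] = y := hye
    subst hxe' hye'
    have hul : u.length = l := hu
    have hvl : v.length = l := hv
    rw [take_append_self hul, take_append_self hvl] at hcpre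
    rcases hcpre with ⟨hle, hcp⟩ | ⟨hle, hcp⟩
    · exact Or.inl (CE u v hul hvl hle hcp)
    · exact Or.inr (CE v u hvl hul hle hcp)
  · -- no word of length l
    intro x hx
    have := mem_extSet_length hA' hx
    omega

/-- every boring extension of a set of pairwise compatible words of length
`l` extends to a boring extension of the full level `Σ*_l`. -/
theorem boring_extension_extends (l : ℕ) (S : Set Word) (hS : ∀ w ∈ S, w.length = l)
    (hcompat : ∀ u ∈ S, ∀ v ∈ S, compatible u v)
    (e : Word → Sig) (hbor : BoringExt S l e) :
    ∃ e' : Word → Sig, BoringExt {w : Word | w.length = l} l e' ∧ ∀ w ∈ S, e' w = e w := by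
  exact boring_extension_extends' l S hS hcompat e hbor
end

section
/- Let Σ be a finite alphabet. If Σ* (the set of all finite words over Σ) is coloured with finitely many colours, then there exists an infinite-parameter word W such that the set W[Σ*] = {W(s) : s ∈ Σ*} is monochromatic. -/
/-- An infinite-parameter word over the alphabet `α`: an infinite string over
`α ⊕ {λ_0, λ_1, …}` in which every parameter `λ_k` occurs and the first occurrence of
`λ_{k+1}` appears after the first occurrence of `λ_k`. -/
def IsInfParamWord {α : Type} (W : ℕ → α ⊕ ℕ) : Prop :=
  (∀ k : ℕ, ∃ n : ℕ, W n = Sum.inr k) ∧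
  (∀ k n : ℕ, W n = Sum.inr (k + 1) → ∃ m < n, W m = Sum.inr k)

/-- `IsSubst W s t` expresses that `t = W(s)`: `t` is the initial segment of `W` up to
(but not including) the first occurrence of the parameter `λ_{|s|}`, with every letter kept
and every parameter `λ_i` replaced by `s_i`. -/
def IsSubst {α : Type} (W : ℕ → α ⊕ ℕ) (s t : List α) : Prop :=
  W t.length = Sum.inr s.length ∧
  (∀ m < t.length, W m ≠ Sum.inr s.length) ∧
  (∀ n : ℕ, ∀ hn : n < t.length,
    (∀ a : α, W n = Sum.inl a → t.get ⟨n, hn⟩ = a) ∧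
    (∀ i : ℕ, W n = Sum.inr i → ∃ hi : i < s.length, t.get ⟨n, hn⟩ = s.get ⟨i, hi⟩))

namespace CSaux




variable {X : Type*}

/-- Cumulative lengths of blocks. -/
def offF (f : ℕ → List X) : ℕ → ℕ
  | 0 => 0
  | m + 1 => offF f m + (f m).length

/-- Concatenation of the first `m` blocks. -/
def catF (f : ℕ → List X) : ℕ → List X
  | 0 => []
  | m + 1 => catF f m ++ f m

lemma length_catF (f : ℕ → List X) (m : ℕ) : (catF f m).length = offF f m := by
  induction m with
  | zero => rfl
  | succ m ih => simp [catF, offF, ih]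

lemma offF_mono (f : ℕ → List X) {k m : ℕ} (h : k ≤ m) : offF f k ≤ offF f m := by
  induction h with
  | refl => exact le_refl _
  | step h ih => exact le_trans ih (Nat.le_add_right _ _)

lemma catF_prefix (f : ℕ → List X) {m m' : ℕ} (h : m ≤ m') : catF f m <+: catF f m' := by
  induction h with
  | refl => exact List.prefix_refl _
  | step h ih => exact ih.trans (List.prefix_append _ _)

lemma getElem_catF (f : ℕ → List X) {m k r : ℕ} (hk : k < m) (hr : r < (f k).length) :
    ∃ hi : offF f k + r < (catF f m).length, (catF f m)[offF f k + r] = (f k)[r] := by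
  induction m with
  | zero => omega
  | succ m ih =>
    rcases Nat.lt_succ_iff_lt_or_eq.mp hk with hk' | rfl
    · obtain ⟨hi, he⟩ := ih hk'
      have hi' : offF f k + r < (catF f (m+1)).length := by
        simp only [catF, List.length_append]; omega
      refine ⟨hi', ?_⟩
      show (catF f m ++ f m)[offF f k + r]'(by simp only [catF, List.length_append] at hi' ⊢; omega) = _
      rw [List.getElem_append_left hi]
      exact he
    · have hl : (catF f k).length = offF f k := length_catF f k
      have hi' : offF f k + r < (catF f (k+1)).length := by
        simp only [catF, List.length_append, hl]; omega
      refine ⟨hi', ?_⟩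
      show (catF f k ++ f k)[offF f k + r]'(by simp only [catF, List.length_append] at hi' ⊢; omega) = _
      rw [List.getElem_append_right (by omega : (catF f k).length ≤ offF f k + r)]
      congr 1
      omega

lemma exists_decomp (f : ℕ → List X) {m i : ℕ} (h : i < offF f m) :
    ∃ k, k < m ∧ ∃ r, r < (f k).length ∧ i = offF f k + r := by
  induction m with
  | zero => simp [offF] at h
  | succ m ih =>
    by_cases h' : i < offF f m
    · obtain ⟨k, hk, r, hr, he⟩ := ih h'
      exact ⟨k, by omega, r, hr, he⟩
    · refine ⟨m, by omega, i - offF f m, ?_, ?_⟩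
      · simp only [offF] at h; omega
      · omega

lemma catF_succ_eq (f : ℕ → List X) (m : ℕ) :
    catF f (m + 1) = f 0 ++ catF (fun k => f (k + 1)) m := by
  induction m with
  | zero => simp [catF]
  | succ m ih =>
    show catF f (m+1) ++ f (m+1) = _
    rw [ih]
    simp [catF, List.append_assoc]

lemma catF_eq_flatten_ofFn (f : ℕ → List X) (m : ℕ) :
    catF f m = (List.ofFn (fun i : Fin m => f i)).flatten := by
  induction m with
  | zero => simp [catF]
  | succ m ih =>
    rw [List.ofFn_succ']
    show catF f m ++ f m = _
    rw [ih]
    simp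






attribute [local instance] Ultrafilter.semigroup

section UltraAlg

variable {M : Type} [Semigroup M]

lemma umem_mul {U V : Ultrafilter M} {s : Set M} :
    s ∈ U * V ↔ {m | {m' | m * m' ∈ s} ∈ V} ∈ U :=
  Ultrafilter.eventually_mul U V (· ∈ s)

lemma umap_mul {N : Type} [Semigroup N] (f : M →ₙ* N) (U V : Ultrafilter M) :
    Ultrafilter.map f (U * V) = Ultrafilter.map f U * Ultrafilter.map f V := by
  apply Ultrafilter.coe_injective
  apply Filter.ext
  intro s
  show s ∈ Ultrafilter.map f (U * V) ↔ s ∈ Ultrafilter.map f U * Ultrafilter.map f V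
  rw [Ultrafilter.mem_map, umem_mul, umem_mul]
  have : ∀ m, {m' | m * m' ∈ f ⁻¹' s} = f ⁻¹' {y | f m * y ∈ s} := by
    intro m; ext m'; simp [map_mul]
  constructor
  · intro h
    have : {m | {m' | m * m' ∈ f ⁻¹' s} ∈ V} ⊆ f ⁻¹' {x | {m' | x * m' ∈ s} ∈ Ultrafilter.map f V} := by
      intro m hm
      simp only [Set.mem_preimage, Set.mem_setOf_eq, Ultrafilter.mem_map]
      rw [← this m]; exact hm
    exact Ultrafilter.mem_map.mpr (Filter.mem_of_superset h this)
  · intro h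
    have h' : f ⁻¹' {x | {m' | x * m' ∈ s} ∈ Ultrafilter.map f V} ∈ U := Ultrafilter.mem_map.mp h
    refine Filter.mem_of_superset h' ?_
    intro m hm
    simp only [Set.mem_preimage, Set.mem_setOf_eq, Ultrafilter.mem_map] at hm
    show {m' | m * m' ∈ f ⁻¹' s} ∈ V
    rw [this m]; exact hm

lemma umem_closed (s : Set M) : IsClosed {U : Ultrafilter M | s ∈ U} := by
  rw [← isOpen_compl_iff]
  have : {U : Ultrafilter M | s ∈ U}ᶜ = {U : Ultrafilter M | sᶜ ∈ U} := by
    ext U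
    simp [Ultrafilter.compl_mem_iff_notMem]
  rw [this]
  exact ultrafilter_isOpen_basic sᶜ

/-- Existence of a minimal closed left ideal inside a given closed left ideal of a
closed subsemigroup of `Ultrafilter M`, together with the key minimality property. -/
lemma exists_minimal_lideal (S : Set (Ultrafilter M)) (hScl : IsClosed S)
    (hSmul : ∀ x ∈ S, ∀ y ∈ S, x * y ∈ S)
    (L0 : Set (Ultrafilter M)) (hL0S : L0 ⊆ S) (hL0cl : IsClosed L0) (hL0ne : L0.Nonempty)
    (hL0id : ∀ x ∈ S, ∀ y ∈ L0, x * y ∈ L0) :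
    ∃ L ⊆ L0, IsClosed L ∧ L.Nonempty ∧ (∀ x ∈ S, ∀ y ∈ L, x * y ∈ L) ∧
      ∀ x ∈ L, L ⊆ (· * x) '' S := by
  let 𝒮 : Set (Set (Ultrafilter M)) :=
    {L | L ⊆ L0 ∧ IsClosed L ∧ L.Nonempty ∧ ∀ x ∈ S, ∀ y ∈ L, x * y ∈ L}
  obtain ⟨L, hLmin⟩ : ∃ L, Minimal (· ∈ 𝒮) L := by
    refine zorn_superset 𝒮 fun c hcs hc => ?_
    rcases c.eq_empty_or_nonempty with rfl | hcne
    · exact ⟨L0, ⟨le_refl _, hL0cl, hL0ne, hL0id⟩, by simp⟩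
    refine ⟨⋂₀ c, ⟨?_, ?_, ?_, ?_⟩, fun s hs => Set.sInter_subset_of_mem hs⟩
    · obtain ⟨t, ht⟩ := hcne
      exact (Set.sInter_subset_of_mem ht).trans (hcs ht).1
    · exact isClosed_sInter fun t ht => (hcs ht).2.1
    · convert IsCompact.nonempty_iInter_of_directed_nonempty_isCompact_isClosed
        ((↑) : c → Set (Ultrafilter M)) ?_ ?_ ?_ ?_
      · exact Set.sInter_eq_iInter
      · exact hcne.coe_sort
      · exact DirectedOn.directed_val (IsChain.directedOn hc.symm)
      · exact fun i => (hcs i.prop).2.2.1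
      · exact fun i => (hcs i.prop).2.1.isCompact
      · exact fun i => (hcs i.prop).2.1
    · intro x hx y hy
      rw [Set.mem_sInter] at hy ⊢
      exact fun t ht => (hcs ht).2.2.2 x hx y (hy t ht)
  obtain ⟨hL0', hLcl, hLne, hLid⟩ := hLmin.prop
  refine ⟨L, hL0', hLcl, hLne, hLid, ?_⟩
  intro x hx
  have himg : ((· * x) '' S) ∈ 𝒮 := by
    refine ⟨?_, ?_, ?_, ?_⟩
    · rintro _ ⟨s, hs, rfl⟩; exact hL0id s hs x (hL0' hx)
    · exact ((hScl.isCompact.image (Ultrafilter.continuous_mul_left x)).isClosed)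
    · obtain ⟨s, hs⟩ : S.Nonempty := ⟨x, hL0S (hL0' hx)⟩
      exact ⟨s * x, s, hs, rfl⟩
    · rintro u hu _ ⟨s, hs, rfl⟩
      exact ⟨u * s, hSmul u hu s hs, by simp [mul_assoc]⟩
  have hsub : (· * x) '' S ⊆ L := by
    rintro _ ⟨s, hs, rfl⟩
    exact hLid s hs x hx
  exact (hLmin.eq_of_subset himg hsub).ge

end UltraAlg





attribute [local instance] Ultrafilter.semigroup

section Words
variable {α : Type}

/-- Words over `α` together with a variable symbol `none`. -/
abbrev Wd (α : Type) := FreeMonoid (Option α)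

/-- Variable-free words. -/
def NF : Set (Wd α) := {x | none ∉ FreeMonoid.toList x}

/-- Left-variable words. -/
def LV : Set (Wd α) := {x | ∃ y, FreeMonoid.toList x = none :: y}

/-- Substitution of the letter `a` for the variable. -/
def sig (a : α) : Wd α →* Wd α := FreeMonoid.map (fun o => some (o.getD a))

lemma toList_sig (a : α) (x : Wd α) :
    FreeMonoid.toList (sig a x) = (FreeMonoid.toList x).map (fun o => some (o.getD a)) := rfl

lemma sig_mem_NF (a : α) (x : Wd α) : sig a x ∈ NF := by
  simp [NF, toList_sig]

lemma sig_eq_self_of_NF (a : α) {x : Wd α} (hx : x ∈ NF) : sig a x = x := by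
  have h : FreeMonoid.toList (sig a x) = FreeMonoid.toList x := by
    rw [toList_sig]
    have : ∀ o ∈ FreeMonoid.toList x, some (o.getD a) = id o := by
      intro o ho
      match o with
      | some b => rfl
      | none => exact absurd ho hx
    rw [List.map_congr_left this, List.map_id]
  have := congrArg FreeMonoid.ofList h
  rwa [FreeMonoid.ofList_toList, FreeMonoid.ofList_toList] at this

lemma mul_mem_NF {x y : Wd α} (hx : x ∈ NF) (hy : y ∈ NF) : x * y ∈ NF := by
  simp only [NF, Set.mem_setOf_eq, FreeMonoid.toList_mul, List.mem_append] at *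
  tauto

lemma mul_mem_LV {x : Wd α} (y : Wd α) (hx : x ∈ LV) : x * y ∈ LV := by
  obtain ⟨t, ht⟩ := hx
  exact ⟨t ++ FreeMonoid.toList y, by rw [FreeMonoid.toList_mul, ht]; rfl⟩

lemma NF_mem_map_sig (a : α) (U : Ultrafilter (Wd α)) :
    NF ∈ Ultrafilter.map (sig a) U := by
  rw [Ultrafilter.mem_map]
  exact Filter.univ_mem' fun x => sig_mem_NF a x

lemma map_sig_eq_self (a : α) {U : Ultrafilter (Wd α)} (hU : NF ∈ U) :
    Ultrafilter.map (sig a) U = U := by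
  apply Ultrafilter.coe_injective
  rw [Ultrafilter.coe_map]
  have : (sig a : Wd α → Wd α) =ᶠ[U] id :=
    Filter.eventuallyEq_of_mem hU (fun x hx => sig_eq_self_of_NF a hx)
  rw [Filter.map_congr this, Filter.map_id]

/-- The ultrafilter-theoretic heart of the Carlson–Simpson theorem. -/
lemma exists_good_ultrafilters (α : Type) :
    ∃ w0 v : Ultrafilter (Wd α),
      NF ∈ w0 ∧ LV ∈ v ∧
      (∀ a : α, w0 * Ultrafilter.map (sig a) v = w0) ∧
      (∀ a b : α, Ultrafilter.map (sig a) v * Ultrafilter.map (sig b) v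
        = Ultrafilter.map (sig a) v) := by
  classical
  -- the closed subsemigroup of ultrafilters concentrating on variable-free words
  set SL : Set (Ultrafilter (Wd α)) := {U | NF ∈ U} with hSL
  have hSLcl : IsClosed SL := umem_closed NF
  have hSLne : SL.Nonempty := by
    refine ⟨pure 1, ?_⟩
    rw [hSL, Set.mem_setOf_eq, Ultrafilter.mem_pure]
    show none ∉ FreeMonoid.toList (1 : Wd α)
    simp [FreeMonoid.toList_one]
  have hSLmul : ∀ x ∈ SL, ∀ y ∈ SL, x * y ∈ SL := by
    intro x hx y hy
    rw [hSL, Set.mem_setOf_eq, umem_mul]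
    refine Filter.mem_of_superset hx fun m hm => Filter.mem_of_superset hy fun m' hm' => ?_
    exact mul_mem_NF hm hm'
  -- minimal left ideal of SL and idempotent w0 in it
  obtain ⟨M0, hM0SL, hM0cl, hM0ne, hM0id, hM0min⟩ :=
    exists_minimal_lideal SL hSLcl hSLmul SL (le_refl _) hSLcl hSLne hSLmul
  obtain ⟨w0, hw0M0, hw0idem⟩ :=
    exists_idempotent_in_compact_subsemigroup Ultrafilter.continuous_mul_left M0 hM0ne
      hM0cl.isCompact (fun x hx y hy => hM0id x (hM0SL hx) y hy)
  have hw0SL : w0 ∈ SL := hM0SL hw0M0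
  -- minimality property of w0
  have hw0min : ∀ u : Ultrafilter (Wd α), u ∈ SL → u * u = u → u * w0 = u → w0 * u = u →
      u = w0 := by
    intro u huSL huid huw0 hw0u
    have huM0 : u ∈ M0 := by rw [← huw0]; exact hM0id u huSL w0 hw0M0
    obtain ⟨s, hsSL, hsu⟩ := hM0min u huM0 hw0M0
    have hsu' : s * u = w0 := hsu
    have h1 : w0 * u = w0 := by
      rw [← hsu', mul_assoc, huid, hsu']
    rw [← hw0u, h1]
  -- minimal left ideal of the whole semigroup inside the range of (· * w0)
  have hrangecl : IsClosed (Set.range (· * w0)) := by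
    rw [← Set.image_univ]
    exact (isCompact_univ.image (Ultrafilter.continuous_mul_left w0)).isClosed
  obtain ⟨L, hLsub, hLcl, hLne, hLid, hLmin⟩ :=
    exists_minimal_lideal Set.univ isClosed_univ (fun _ _ _ _ => trivial)
      (Set.range (· * w0)) (Set.subset_univ _) hrangecl ⟨w0 * w0, w0, rfl⟩
      (by rintro x - _ ⟨y, rfl⟩; exact ⟨x * y, by simp [mul_assoc]⟩)
  -- idempotent v in L concentrating on left-variable words
  set CV : Set (Ultrafilter (Wd α)) := {U | LV ∈ U} with hCV
  have hLVmul : ∀ (x : Ultrafilter (Wd α)), x ∈ CV → ∀ (y : Ultrafilter (Wd α)), x * y ∈ CV := by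
    intro x hx y
    rw [hCV, Set.mem_setOf_eq, umem_mul]
    refine Filter.mem_of_superset hx fun m hm => Filter.univ_mem' fun m' => ?_
    exact mul_mem_LV m' hm
  have hCne : (L ∩ CV).Nonempty := by
    obtain ⟨e, he⟩ := hLne
    refine ⟨pure (FreeMonoid.ofList [none]) * e, hLid _ trivial e he, ?_⟩
    apply hLVmul
    rw [hCV, Set.mem_setOf_eq, Ultrafilter.mem_pure]
    exact ⟨[], rfl⟩
  obtain ⟨v, hvC, hvidem⟩ :=
    exists_idempotent_in_compact_subsemigroup Ultrafilter.continuous_mul_left (L ∩ CV) hCne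
      (hLcl.inter (umem_closed LV)).isCompact
      (fun x hx y hy => ⟨hLid x trivial y hy.1, hLVmul x hx.2 y⟩)
  have hvL : v ∈ L := hvC.1
  have hvLV : LV ∈ v := hvC.2
  have hvw0 : v * w0 = v := by
    obtain ⟨y, hy⟩ := hLsub hvL
    rw [← hy, mul_assoc, hw0idem]
  -- the substituted ultrafilters
  have hNFw0 : NF ∈ w0 := hw0SL
  have humul : ∀ (a : α) (U V : Ultrafilter (Wd α)),
      Ultrafilter.map (sig a) (U * V)
        = Ultrafilter.map (sig a) U * Ultrafilter.map (sig a) V := by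
    intro a U V
    exact umap_mul (sig a).toMulHom U V
  have huaw0 : ∀ a : α, Ultrafilter.map (sig a) v * w0 = Ultrafilter.map (sig a) v := by
    intro a
    conv_lhs => rw [← map_sig_eq_self a hNFw0]
    rw [← humul, hvw0]
  have hw0ua : ∀ a : α, w0 * Ultrafilter.map (sig a) v = w0 := by
    intro a
    set u := Ultrafilter.map (sig a) v with hu
    have he'idem : (w0 * v) * (w0 * v) = w0 * v := by
      have : (w0 * v) * (w0 * v) = w0 * ((v * w0) * v) := by
        simp only [mul_assoc]
      rw [this, hvw0, hvidem]
    have hfa : Ultrafilter.map (sig a) (w0 * v) = w0 * u := by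
      rw [humul, map_sig_eq_self a hNFw0]
    have hfidem : (w0 * u) * (w0 * u) = w0 * u := by
      rw [← hfa, ← humul, he'idem]
    have hfSL : w0 * u ∈ SL := hSLmul w0 hw0SL u (NF_mem_map_sig a v)
    have hfw0 : (w0 * u) * w0 = w0 * u := by
      rw [mul_assoc, huaw0]
    have hw0f : w0 * (w0 * u) = w0 * u := by
      rw [← mul_assoc, hw0idem]
    exact hw0min (w0 * u) hfSL hfidem hfw0 hw0f
  refine ⟨w0, v, hNFw0, hvLV, hw0ua, ?_⟩
  intro a b
  calc Ultrafilter.map (sig a) v * Ultrafilter.map (sig b) v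
      = (Ultrafilter.map (sig a) v * w0) * Ultrafilter.map (sig b) v := by rw [huaw0]
    _ = Ultrafilter.map (sig a) v * (w0 * Ultrafilter.map (sig b) v) := by rw [mul_assoc]
    _ = Ultrafilter.map (sig a) v * w0 := by rw [hw0ua]
    _ = Ultrafilter.map (sig a) v := huaw0 a

end Words




attribute [local instance] Ultrafilter.semigroup

variable {α : Type}

/-- Decoding a variable-free word into a word over `α`. -/
def decode (x : Wd α) : List α := (FreeMonoid.toList x).filterMap id

/-- The product `w₀ · x₁[s₁] ⋯ xₙ[sₙ]`. -/
def PR (w0w : Wd α) (c : List (Wd α)) (s : List α) : Wd α :=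
  w0w * (List.zipWith (fun x a => sig a x) c s).prod

lemma prod_zipWith_toList (c : List (Wd α)) (s : List α) :
    FreeMonoid.toList ((List.zipWith (fun x a => sig a x) c s).prod)
      = (List.zipWith (fun x a => (FreeMonoid.toList x).map (fun o => some (o.getD a)))
          c s).flatten := by
  induction c generalizing s with
  | nil => simp [FreeMonoid.toList_one]
  | cons x c ih =>
    cases s with
    | nil => simp [FreeMonoid.toList_one]
    | cons a s =>
      simp only [List.zipWith_cons_cons, List.prod_cons, List.flatten_cons,
        FreeMonoid.toList_mul, ih]
      rfl

lemma flatten_eq_catF {X : Type*} (l : List (List X)) :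
    l.flatten = catF (fun i => l.getD i []) l.length := by
  induction l with
  | nil => simp [catF]
  | cons hd tl ih =>
    rw [List.flatten_cons, ih]
    rw [show (hd :: tl).length = tl.length + 1 from rfl, catF_succ_eq]
    congr 1

lemma getElem_zipWith' {A B C : Type*} (f : A → B → C) :
    ∀ (l1 : List A) (l2 : List B) (j : ℕ)
    (h1 : j < l1.length) (h2 : j < l2.length)
    (h : j < (List.zipWith f l1 l2).length),
    (List.zipWith f l1 l2)[j] = f (l1[j]'h1) (l2[j]'h2)
  | a :: l1, b :: l2, 0, _, _, _ => rfl
  | a :: l1, b :: l2, j+1, h1, h2, h => by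
    simp only [List.zipWith_cons_cons, List.getElem_cons_succ]
    exact getElem_zipWith' f l1 l2 j (by simpa using h1) (by simpa using h2)
      (by simpa using h)

/-- The combinatorial core: a starting word and a sequence of left-variable words all of
whose substitution products have colour `c`. -/
lemma exists_sequence (α : Type) [Fintype α] (k : ℕ) (χ : List α → Fin k) :
    ∃ (c : Fin k) (w0w : Wd α) (xs : ℕ → Wd α),
      (∀ n, xs n ∈ LV) ∧
      ∀ (n : ℕ) (s : List α), s.length = n →
        PR w0w (List.ofFn fun i : Fin n => xs i) s ∈ NF ∧
        χ (decode (PR w0w (List.ofFn fun i : Fin n => xs i) s)) = c := by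
  classical
  obtain ⟨w0, v, hNFw0, hLVv, hw0u, huu⟩ := exists_good_ultrafilters α
  obtain ⟨c, hc⟩ := Ultrafilter.eq_pure_of_finite
    (Ultrafilter.map (fun x : Wd α => χ (decode x)) w0)
  have hclass : {x : Wd α | χ (decode x) = c} ∈ w0 := by
    have h1 : {y : Fin k | y = c} ∈ Ultrafilter.map (fun x : Wd α => χ (decode x)) w0 := by
      rw [hc, Ultrafilter.mem_pure]
      exact rfl
    rw [Ultrafilter.mem_map] at h1
    exact h1
  set A : Set (Wd α) := NF ∩ {x | χ (decode x) = c} with hA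
  have hAw0 : A ∈ w0 := Filter.inter_mem hNFw0 hclass
  set Good : Set (Wd α) :=
    {p | p ∈ A ∧ ∀ a : α, {q | p * q ∈ A} ∈ Ultrafilter.map (sig a) v} with hGood
  have hGoodw0 : Good ∈ w0 := by
    have h3 : {p : Wd α | ∀ a : α, {q | p * q ∈ A} ∈ Ultrafilter.map (sig a) v} ∈ w0 := by
      refine Filter.eventually_all.mpr fun a => ?_
      have h2 := hAw0
      rw [← hw0u a, umem_mul] at h2
      exact h2
    exact Filter.inter_mem hAw0 h3
  have hstep : ∀ p ∈ Good, ∀ a : α, {x : Wd α | p * sig a x ∈ Good} ∈ v := by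
    intro p hp a
    have hB : {q : Wd α | p * q ∈ A} ∈ Ultrafilter.map (sig a) v := hp.2 a
    have hkey : {q : Wd α | p * q ∈ Good} ∈ Ultrafilter.map (sig a) v := by
      have hsub2 : ∀ b : α,
          {q : Wd α | {r : Wd α | (p * q) * r ∈ A} ∈ Ultrafilter.map (sig b) v}
            ∈ Ultrafilter.map (sig a) v := by
        intro b
        have h4 : {q : Wd α | p * q ∈ A}
            ∈ Ultrafilter.map (sig a) v * Ultrafilter.map (sig b) v := by
          rw [huu a b]; exact hB
        rw [umem_mul] at h4
        refine Filter.mem_of_superset h4 ?_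
        intro q hq
        simp only [Set.mem_setOf_eq] at hq ⊢
        convert hq using 2
        ext r
        simp [mul_assoc]
      have h5 : {q : Wd α | ∀ b : α, {r : Wd α | (p * q) * r ∈ A} ∈ Ultrafilter.map (sig b) v}
          ∈ Ultrafilter.map (sig a) v := Filter.eventually_all.mpr hsub2
      refine Filter.mem_of_superset (Filter.inter_mem hB h5) ?_
      intro q hq
      exact ⟨hq.1, fun b => hq.2 b⟩
    rw [Ultrafilter.mem_map] at hkey
    exact hkey
  obtain ⟨w0w, hw0wGood⟩ := Ultrafilter.nonempty_of_mem hGoodw0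
  have hstepEx : ∀ cseq : List (Wd α),
      (∀ s : List α, s.length = cseq.length → PR w0w cseq s ∈ Good) →
      ∃ x, x ∈ LV ∧
        ∀ s : List α, s.length = (cseq ++ [x]).length → PR w0w (cseq ++ [x]) s ∈ Good := by
    intro cseq hc'
    have hT : {x : Wd α | x ∈ LV ∧ ∀ f : Fin cseq.length → α, ∀ a : α,
        PR w0w cseq (List.ofFn f) * sig a x ∈ Good} ∈ v := by
      refine Filter.inter_mem hLVv ?_
      refine Filter.eventually_all.mpr fun f => ?_
      refine Filter.eventually_all.mpr fun a => ?_
      exact hstep _ (hc' (List.ofFn f) (by simp)) a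
    obtain ⟨x, hxLV, hx⟩ := Ultrafilter.nonempty_of_mem hT
    refine ⟨x, hxLV, ?_⟩
    intro s hs
    rcases List.eq_nil_or_concat s with rfl | ⟨s', a, rfl⟩
    · simp at hs
    · rw [List.concat_eq_append] at hs ⊢
      have hlen : s'.length = cseq.length := by
        simp only [List.length_append, List.length_singleton] at hs
        omega
      have hPReq : PR w0w (cseq ++ [x]) (s' ++ [a]) = PR w0w cseq s' * sig a x := by
        unfold PR
        rw [List.zipWith_append hlen.symm]
        simp [mul_assoc]
      rw [hPReq]
      have h6 := hx (fun i : Fin cseq.length => s'[(i : ℕ)]'(by omega)) a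
      have hs' : List.ofFn (fun i : Fin cseq.length => s'[(i : ℕ)]'(by omega)) = s' := by
        apply List.ext_getElem
        · simp [hlen]
        · intro i h1 h2
          simp
      rwa [hs'] at h6
  -- iterate the step
  have base : ∀ s : List α, s.length = ([] : List (Wd α)).length → PR w0w [] s ∈ Good := by
    intro s hs
    rw [List.length_nil] at hs
    rw [List.eq_nil_of_length_eq_zero hs]
    show w0w * ([] : List (Wd α)).prod ∈ Good
    simpa using hw0wGood
  let Pp : List (Wd α) → Prop := fun cseq =>
    ∀ s : List α, s.length = cseq.length → PR w0w cseq s ∈ Good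
  let pick : {cs : List (Wd α) // Pp cs} → Wd α :=
    fun p => Classical.choose (hstepEx p.1 p.2)
  have pickspec : ∀ p : {cs : List (Wd α) // Pp cs},
      pick p ∈ LV ∧ ∀ s : List α, s.length = (p.1 ++ [pick p]).length →
        PR w0w (p.1 ++ [pick p]) s ∈ Good :=
    fun p => Classical.choose_spec (hstepEx p.1 p.2)
  let f : {cs : List (Wd α) // Pp cs} → {cs : List (Wd α) // Pp cs} :=
    fun p => ⟨p.1 ++ [pick p], (pickspec p).2⟩
  let Sq : ℕ → {cs : List (Wd α) // Pp cs} := fun n => f^[n] ⟨[], base⟩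
  have hSsucc : ∀ n, Sq (n+1) = f (Sq n) := fun n => Function.iterate_succ_apply' f n _
  let xs : ℕ → Wd α := fun n => pick (Sq n)
  have hSval : ∀ n, (Sq n).1 = List.ofFn (fun i : Fin n => xs i) := by
    intro n
    induction n with
    | zero => simp [Sq]
    | succ n ih =>
      rw [hSsucc n]
      show (Sq n).1 ++ [pick (Sq n)] = _
      rw [ih, List.ofFn_succ']
      simp [List.concat_eq_append]
      rfl
  refine ⟨c, w0w, xs, fun n => (pickspec (Sq n)).1, ?_⟩
  intro n s hs
  have hg : PR w0w (List.ofFn fun i : Fin n => xs i) s ∈ Good := by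
    have h7 := (Sq n).2 s (by rw [hSval n]; simpa using hs)
    rwa [hSval n] at h7
  exact ⟨hg.1.1, hg.1.2⟩

end CSaux

/-- Carlson–Simpson: for every finite alphabet `α` and every colouring of
the set of finite words over `α` with finitely many colours, there is an
infinite-parameter word `W` such that `W[α*] = {W(s) : s ∈ α*}` is monochromatic. -/
theorem carlson_simpson (α : Type) [Fintype α] (k : ℕ) (χ : List α → Fin k) :
    ∃ W : ℕ → α ⊕ ℕ, IsInfParamWord W ∧
      ∃ c : Fin k, ∀ s t : List α, IsSubst W s t → χ t = c := by
  classical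
  obtain ⟨c, w0w, xs, hxsLV, hPR⟩ := CSaux.exists_sequence α k χ
  -- the blocks of the infinite word
  set B : ℕ → List (Option α) := fun n =>
    Nat.casesOn n (FreeMonoid.toList w0w) (fun j => FreeMonoid.toList (xs j)) with hBdef
  have hB0 : none ∉ B 0 := by
    have h0 := (hPR 0 [] rfl).1
    have he : CSaux.PR w0w (List.ofFn (fun i : Fin 0 => xs i)) [] = w0w := by
      unfold CSaux.PR; simp
    rw [he] at h0
    exact h0
  have hBs : ∀ j, ∃ y, B (j+1) = none :: y := fun j => hxsLV j
  have hBlen : ∀ j, 0 < (B (j+1)).length := by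
    intro j; obtain ⟨y, hy⟩ := hBs j; simp [hy]
  set SB : ℕ → List (α ⊕ ℕ) := fun n =>
    (B n).map (fun o => Option.casesOn o (Sum.inr (n-1)) Sum.inl) with hSBdef
  have hSBlen : ∀ n, (SB n).length = (B n).length := fun n => List.length_map _
  have hSBval : ∀ m r (hr : r < (B m).length),
      (SB m)[r]'(by rw [hSBlen]; exact hr)
        = (Option.casesOn ((B m)[r]'hr) (Sum.inr (m-1)) Sum.inl : α ⊕ ℕ) :=
    fun m r hr => List.getElem_map _
  set W : ℕ → α ⊕ ℕ := fun i => (CSaux.catF SB (i+2)).getD i (Sum.inr 0) with hWdef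
  -- offset bounds
  have hofflb : ∀ m, m ≤ CSaux.offF SB (m+1) := by
    intro m
    induction m with
    | zero => exact Nat.zero_le _
    | succ m ih =>
      have h1 : CSaux.offF SB (m+1+1) = CSaux.offF SB (m+1) + (SB (m+1)).length := rfl
      have h2 : 0 < (SB (m+1)).length := by rw [hSBlen]; exact hBlen m
      omega
  have hofflb' : ∀ n, n ≤ CSaux.offF SB n + 1 := by
    intro n
    cases n with
    | zero => omega
    | succ m => have := hofflb m; omega
  have hWeval : ∀ n r (hr : r < (SB n).length), W (CSaux.offF SB n + r) = (SB n)[r]'hr := by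
    intro n r hr
    have hnm : n < CSaux.offF SB n + r + 2 := by have := hofflb' n; omega
    obtain ⟨hi, he⟩ := CSaux.getElem_catF SB hnm hr
    rw [hWdef]
    show (CSaux.catF SB _).getD _ _ = _
    rw [List.getD_eq_getElem _ _ hi, he]
  have hWtotal : ∀ i : ℕ, i < CSaux.offF SB (i+2) := by
    intro i
    have h := hofflb (i+1)
    have he : i + 1 + 1 = i + 2 := rfl
    rw [he] at h
    omega
  have hWdecomp : ∀ i : ℕ, ∃ n r, n < i + 2 ∧ r < (SB n).length ∧ i = CSaux.offF SB n + r := by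
    intro i
    obtain ⟨n, hn, r, hr, he⟩ := CSaux.exists_decomp SB (hWtotal i)
    exact ⟨n, r, hn, hr, he⟩
  -- values of W at the start of blocks
  have hfirst : ∀ kk : ℕ, W (CSaux.offF SB (kk+1)) = Sum.inr kk := by
    intro kk
    have h0 : 0 < (SB (kk+1)).length := by rw [hSBlen]; exact hBlen kk
    have he := hWeval (kk+1) 0 h0
    rw [Nat.add_zero] at he
    rw [he]
    have hrB : 0 < (B (kk+1)).length := hBlen kk
    rw [hSBval (kk+1) 0 hrB]
    obtain ⟨y, hy⟩ := hBs kk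
    have h6 : (B (kk+1))[0]'hrB = none := by simp [hy]
    rw [h6]
    simp
  -- any occurrence of `inr kk` is at or after the start of block `kk+1`
  have hinr : ∀ i kk : ℕ, W i = Sum.inr kk → CSaux.offF SB (kk+1) ≤ i := by
    intro i kk h
    obtain ⟨n, r, hn, hr, hie⟩ := hWdecomp i
    have hwe : W i = (SB n)[r]'hr := by rw [hie]; exact hWeval n r hr
    rw [hwe] at h
    have hrB : r < (B n).length := by rwa [hSBlen] at hr
    rw [hSBval n r hrB] at h
    match hBv : (B n)[r]'hrB with
    | some a => rw [hBv] at h; simp at h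
    | none =>
      rw [hBv] at h
      simp only [] at h
      cases n with
      | zero => exact absurd (hBv ▸ List.getElem_mem hrB) hB0
      | succ j =>
        have hjk : j = kk := by simpa using h
        subst hjk
        have : CSaux.offF SB (j+1) ≤ CSaux.offF SB (j+1) + r := by omega
        omega
  refine ⟨W, ⟨fun kk => ⟨CSaux.offF SB (kk+1), hfirst kk⟩, ?_⟩, c, ?_⟩
  · -- second condition of IsInfParamWord
    intro kk n h
    have h1 := hinr n (kk+1) h
    refine ⟨CSaux.offF SB (kk+1), ?_, hfirst kk⟩
    have h2 : CSaux.offF SB (kk+1+1) = CSaux.offF SB (kk+1) + (SB (kk+1)).length := rfl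
    have h3 : 0 < (SB (kk+1)).length := by rw [hSBlen]; exact hBlen kk
    omega
  · -- monochromaticity
    intro s t hsub
    obtain ⟨h1, h2, h3⟩ := hsub
    set n := s.length with hn
    -- t.length is the start of block n+1
    have htlen : t.length = CSaux.offF SB (n+1) := by
      have hge := hinr t.length n h1
      rcases lt_trichotomy t.length (CSaux.offF SB (n+1)) with h | h | h
      · omega
      · exact h
      · exact absurd (hfirst n) (h2 (CSaux.offF SB (n+1)) h)
    -- the canonical substituted word
    have hg := hPR n s rfl
    set P := CSaux.PR w0w (List.ofFn fun i : Fin n => xs i) s with hP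
    set Lz := List.zipWith
        (fun x a => (FreeMonoid.toList x).map (fun o => some (o.getD a)))
        (List.ofFn fun i : Fin n => xs i) s with hLz
    have hLzlen : Lz.length = n := by
      rw [hLz, List.length_zipWith]; simp; omega
    have hPtoList : FreeMonoid.toList P = B 0 ++ Lz.flatten := by
      rw [hP]
      show FreeMonoid.toList (w0w * _) = _
      rw [FreeMonoid.toList_mul, CSaux.prod_zipWith_toList]
      rfl
    set SUB : ℕ → List (Option α) := fun i => (B 0 :: Lz).getD i [] with hSUBdef
    have hcat : FreeMonoid.toList P = CSaux.catF SUB (n+1) := by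
      rw [hPtoList, ← List.flatten_cons, CSaux.flatten_eq_catF]
      have hl : (B 0 :: Lz).length = n + 1 := by simp [hLzlen]
      rw [hl]
    have hSUB0 : SUB 0 = B 0 := rfl
    have hSUBs : ∀ j (hj : j < n), SUB (j+1)
        = (B (j+1)).map (fun o => some (o.getD (s[j]'(by omega)))) := by
      intro j hj
      show (B 0 :: Lz).getD (j+1) [] = _
      rw [List.getD_cons_succ]
      show (List.zipWith (fun x a => (FreeMonoid.toList x).map (fun o => some (o.getD a)))
          (List.ofFn fun i : Fin n => xs i) s).getD j [] = _
      have hj1 : j < (List.ofFn fun i : Fin n => xs i).length := by simp; omega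
      have hj2 : j < s.length := by omega
      rw [List.getD_eq_getElem _ _ (by rw [List.length_zipWith]; simp; omega)]
      rw [CSaux.getElem_zipWith' _ _ _ j hj1 hj2]
      have hof : (List.ofFn fun i : Fin n => xs i)[j]'hj1 = xs j := by
        simp
      rw [hof]
    have hSUBlen : ∀ i, i ≤ n → (SUB i).length = (SB i).length := by
      intro i hi
      cases i with
      | zero => rw [hSUB0, hSBlen]
      | succ j =>
        rw [hSUBs j (by omega), hSBlen]
        simp
    have hoffeq : ∀ m, m ≤ n+1 → CSaux.offF SUB m = CSaux.offF SB m := by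
      intro m hm
      induction m with
      | zero => rfl
      | succ m ih =>
        show CSaux.offF SUB m + (SUB m).length = CSaux.offF SB m + (SB m).length
        rw [ih (by omega), hSUBlen m (by omega)]
    have hlenP : (FreeMonoid.toList P).length = CSaux.offF SB (n+1) := by
      rw [hcat, CSaux.length_catF, hoffeq _ le_rfl]
    -- the substituted word spells out t
    have hmain : FreeMonoid.toList P = t.map some := by
      apply List.ext_getElem
      · rw [hlenP, List.length_map, htlen]
      · intro i hi1 hi2
        have hiofft : i < CSaux.offF SB (n+1) := by rwa [hlenP] at hi1
        obtain ⟨kk, hkk, r, hr, hie⟩ := CSaux.exists_decomp SB hiofft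
        have hWi : W i = (SB kk)[r]'hr := by rw [hie]; exact hWeval kk r hr
        have hit : i < t.length := by rwa [htlen]
        have hrB : r < (B kk).length := by rwa [hSBlen] at hr
        have hrS : r < (SUB kk).length := by rw [hSUBlen kk (by omega)]; exact hr
        have hLHS : (FreeMonoid.toList P)[i]'hi1 = (SUB kk)[r]'hrS := by
          have hie' : i = CSaux.offF SUB kk + r := by rw [hoffeq kk (by omega)]; exact hie
          obtain ⟨hj, hje⟩ := CSaux.getElem_catF SUB hkk hrS
          have : (FreeMonoid.toList P)[i]'hi1
              = (CSaux.catF SUB (n+1))[CSaux.offF SUB kk + r]'hj := by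
            congr 1
          rw [this, hje]
        have hRHS : (t.map some)[i]'hi2 = some (t[i]'hit) := by
          simp
        rw [hLHS, hRHS]
        have hWSB : W i = (Option.casesOn ((B kk)[r]'hrB) (Sum.inr (kk-1)) Sum.inl : α ⊕ ℕ) := by
          rw [hWi]; exact hSBval kk r hrB
        match hBv : (B kk)[r]'hrB with
        | some a =>
          have hWa : W i = Sum.inl a := by rw [hWSB, hBv]
          have hta : t.get ⟨i, hit⟩ = a := (h3 i hit).1 a hWa
          have htia : t[i]'hit = a := hta
          rw [htia]
          cases kk with
          | zero =>
            exact (List.getElem_of_eq hSUB0 hrS).trans hBv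
          | succ j =>
            have hjn : j < n := by omega
            have e1 := List.getElem_of_eq (hSUBs j hjn) hrS
            rw [e1, List.getElem_map]
            rw [hBv]
            rfl
        | none =>
          have hkk0 : kk ≠ 0 := by
            intro h0
            subst h0
            exact absurd (hBv ▸ List.getElem_mem hrB) hB0
          obtain ⟨j, rfl⟩ : ∃ j, kk = j + 1 := ⟨kk - 1, by omega⟩
          have hjn : j < n := by omega
          have hWj : W i = Sum.inr j := by rw [hWSB, hBv]; rfl
          obtain ⟨hjs, htj⟩ := (h3 i hit).2 j hWj
          have htj' : t[i]'hit = s[j]'hjs := htj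
          rw [htj']
          have e1 := List.getElem_of_eq (hSUBs j hjn) hrS
          rw [e1, List.getElem_map]
          rw [hBv]
          rfl
    -- conclude
    have hdecode : CSaux.decode P = t := by
      unfold CSaux.decode
      rw [hmain, List.filterMap_map]
      show List.filterMap some t = t
      exact List.filterMap_some
    have hχ := hg.2
    rwa [hdecode] at hχ
end
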